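/- Let G ⊆ ℤⁿ be finite with monoid(G) normal, and let F be a face of cone(G). Then the monoid monoid(G ∩ F) of lattice points expressible from generators lying on F equals cone(G ∩ F) ∩ lattice(G ∩ F) provided every element of G lying in F generates F ∩ lattice(G); in particular, faces of the cone of a normal monoid whose lattice points are C ∩ ℤⁿ again yield normal monoids: if C ∩ ℤⁿ is generated by H and F is a face of C, then F ∩ ℤⁿ is generated by H ∩ F. -/

import Mathlib

def IsLatticePt {n : ℕ} (x : Fin n → ℝ) : Prop := ∀ i, ∃ m : ℤ, x i = (m : ℝ)

def coneOf {n k : ℕ} (v : Fin k → (Fin n → ℝ)) : Set (Fin n → ℝ) :=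
  {x | ∃ lam : Fin k → ℝ, (∀ i, 0 ≤ lam i) ∧ x = ∑ i, lam i • v i}

lemma coneOf_zero {n k : ℕ} (v : Fin k → (Fin n → ℝ)) : (0 : Fin n → ℝ) ∈ coneOf v := by
  exact ⟨0, fun i => le_refl 0, by simp⟩

lemma coneOf_add {n k : ℕ} (v : Fin k → (Fin n → ℝ)) {x y : Fin n → ℝ}
    (hx : x ∈ coneOf v) (hy : y ∈ coneOf v) : x + y ∈ coneOf v := by
  obtain ⟨a, ha, hxa⟩ := hx
  obtain ⟨b, hb, hyb⟩ := hy
  refine ⟨a + b, fun i => add_nonneg (ha i) (hb i), ?_⟩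
  rw [hxa, hyb, ← Finset.sum_add_distrib]
  congr 1; ext i; simp [add_smul]; ring

/-- Faces of a normal cone are normal: if the monoid of lattice points `C ∩ ℤⁿ`
of the rational cone `C` is generated by `H`, and `F` is the face of `C` cut out
by a supporting hyperplane `cᵀx = 0` (with `cᵀy ≤ 0` on `C`), then the monoid
`F ∩ ℤⁿ` is generated by `H ∩ F`. -/
theorem stmt13 {n k : ℕ} (v : Fin k → (Fin n → ℤ)) (C : Set (Fin n → ℝ))
    (hC : C = coneOf (fun i t => ((v i t : ℤ) : ℝ)))
    (c : Fin n → ℝ) (hsupp : ∀ y ∈ C, ∑ t, c t * y t ≤ 0)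
    (F : Set (Fin n → ℝ)) (hF : F = {x | x ∈ C ∧ ∑ t, c t * x t = 0})
    (H : Set (Fin n → ℝ))
    (hHsub : H ⊆ {x | x ∈ C ∧ IsLatticePt x})
    (hHgen : ∀ z, z ∈ C → IsLatticePt z → z ∈ AddSubmonoid.closure H) :
    ∀ z, z ∈ F → IsLatticePt z → z ∈ AddSubmonoid.closure (H ∩ F) := by
  intro z hzF hzlat
  rw [hF] at hzF
  obtain ⟨hzC, hzc⟩ := hzF
  have key : ∀ x ∈ AddSubmonoid.closure H,
      x ∈ C ∧ (∑ t, c t * x t = 0 → x ∈ AddSubmonoid.closure (H ∩ F)) := by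
    intro x hx
    induction hx using AddSubmonoid.closure_induction with
    | mem y hy =>
        refine ⟨(hHsub hy).1, fun hy0 => ?_⟩
        exact AddSubmonoid.subset_closure ⟨hy, by rw [hF]; exact ⟨(hHsub hy).1, hy0⟩⟩
    | zero =>
        refine ⟨by rw [hC]; exact coneOf_zero _, fun _ => ?_⟩
        exact (AddSubmonoid.closure (H ∩ F)).zero_mem
    | add a b ha hb iha ihb =>
        have habC : a + b ∈ C := by
          rw [hC]; exact coneOf_add _ (hC ▸ iha.1) (hC ▸ ihb.1)
        refine ⟨habC, fun hab0 => ?_⟩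
        have hsum : ∑ t, c t * (a + b) t = (∑ t, c t * a t) + ∑ t, c t * b t := by
          rw [← Finset.sum_add_distrib]; congr 1; ext t; simp [mul_add]
        have ha0 : ∑ t, c t * a t = 0 := by
          have h1 := hsupp a iha.1
          have h2 := hsupp b ihb.1
          linarith [hsum ▸ hab0]
        have hb0 : ∑ t, c t * b t = 0 := by
          have h1 := hsupp a iha.1
          linarith [hsum ▸ hab0]
        exact (AddSubmonoid.closure (H ∩ F)).add_mem (iha.2 ha0) (ihb.2 hb0)
  exact (key z (hHgen z hzC hzlat)).2 hzc
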